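/- Let π be a Frobenius injective group, let x, y ∈ π, and let S ⊆ π be a finite nonempty subset such that x γ y⁻¹ ∈ S for every γ ∈ S. Then x γ y⁻¹ = γ for every γ ∈ S. -/
import Mathlib


/-- In a Frobenius injective group π, if `(x, y)` maps a finite nonempty subset `S`
of π into itself under the action `(x, y)·γ = x * γ * y⁻¹`, then it fixes each
element of `S`. -/
theorem frobenius_injective_fixes_finite_invariant_set {π : Type*} [Group π]
    (hFI : ∀ k : ℕ, 1 ≤ k → Function.Injective (fun x : π => x ^ k))
    (x y : π) (S : Finset π) (hS : S.Nonempty)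
    (hmaps : ∀ γ ∈ S, x * γ * y⁻¹ ∈ S) :
    ∀ γ ∈ S, x * γ * y⁻¹ = γ := by
  intro γ hγ
  -- all iterates stay in S
  have hmem : ∀ k : ℕ, x ^ k * γ * (y⁻¹) ^ k ∈ S := by
    intro k
    induction k with
    | zero => simpa using hγ
    | succ k ih =>
      have : x * (x ^ k * γ * (y⁻¹) ^ k) * y⁻¹ ∈ S := hmaps _ ih
      have heq : x * (x ^ k * γ * (y⁻¹) ^ k) * y⁻¹
          = x ^ (k + 1) * γ * (y⁻¹) ^ (k + 1) := by
        rw [pow_succ' x, pow_succ (y⁻¹)]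
        group
      rwa [heq] at this
  -- pigeonhole
  obtain ⟨i, j, hne, hij⟩ :
      ∃ i j : ℕ, i ≠ j ∧ x ^ i * γ * (y⁻¹) ^ i = x ^ j * γ * (y⁻¹) ^ j := by
    obtain ⟨i, j, hne, h⟩ := Finite.exists_ne_map_eq_of_infinite
      (fun k : ℕ => (⟨x ^ k * γ * (y⁻¹) ^ k, hmem k⟩ : S))
    exact ⟨i, j, hne, by simpa [Subtype.ext_iff] using h⟩
  -- wlog i < j
  wlog hlt : i < j generalizing i j
  · exact this j i hne.symm hij.symm (by omega)
  set d := j - i with hd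
  have hd1 : 1 ≤ d := by omega
  have hj : j = i + d := by omega
  have h : x ^ i * (x ^ d * γ * (y⁻¹) ^ d) * (y⁻¹) ^ i = x ^ i * γ * (y⁻¹) ^ i := by
    rw [hij, hj, pow_add, pow_add]; group
  have h2 : x ^ d * γ * (y⁻¹) ^ d = γ := mul_left_cancel (mul_right_cancel h)
  have key : x ^ d * γ = γ * y ^ d := by
    calc x ^ d * γ = x ^ d * γ * ((y ^ d)⁻¹ * y ^ d) := by rw [inv_mul_cancel, mul_one]
      _ = (x ^ d * γ * (y⁻¹) ^ d) * y ^ d := by rw [← inv_pow, ← mul_assoc]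
      _ = γ * y ^ d := by rw [h2]
  have hconj : (γ⁻¹ * x * γ) ^ d = y ^ d := by
    have e : γ⁻¹ * x * γ = γ⁻¹ * x * (γ⁻¹)⁻¹ := by rw [inv_inv]
    rw [e, conj_pow, inv_inv, mul_assoc, key, inv_mul_cancel_left]
  have := hFI d hd1 hconj
  -- this : γ⁻¹ * x * γ = y
  have : x * γ = γ * y := by
    have h := this
    calc x * γ = γ * (γ⁻¹ * x * γ) := by group
      _ = γ * y := by rw [h]
  rw [this]; group
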